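/- Let a, b > 0. Then limsup_{λ→∞} ( card{(m,n) ∈ ℤ_{≥0} × ℤ_{≥1} : m²π²/(4a²) + n²π²/(4b²) ≤ λ} − (ab/π)λ − (2b/π)√λ ) / √λ ≤ 0; that is, the number of such lattice points is at most (ab/π)λ + (2b/π)√λ + o(√λ) as λ → ∞. -/

import Mathlib

open Filter Real intervalIntegral

lemma quarter_circle_integral : ∫ x in (0:ℝ)..1, Real.sqrt (1 - x ^ 2) = π / 4 := by
  have h := integral_sqrt_one_sub_sq
  have hsplit : ∫ x in (-1:ℝ)..1, Real.sqrt (1 - x ^ 2)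
      = (∫ x in (-1:ℝ)..0, Real.sqrt (1 - x ^ 2)) + ∫ x in (0:ℝ)..1, Real.sqrt (1 - x ^ 2) := by
    rw [integral_add_adjacent_intervals] <;>
      exact (Continuous.intervalIntegrable (by continuity) _ _)
  have hneg : ∫ x in (-1:ℝ)..0, Real.sqrt (1 - x ^ 2)
      = ∫ x in (0:ℝ)..1, Real.sqrt (1 - x ^ 2) := by
    have := intervalIntegral.integral_comp_neg (a := (0:ℝ)) (b := 1)
      (fun x => Real.sqrt (1 - x ^ 2))
    simp only [neg_sq, neg_zero, neg_neg] at this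
    rw [← this]
  rw [hsplit, hneg] at h
  linarith

lemma scaled_quarter (B : ℝ) (hB : 0 < B) :
    ∫ x in (0:ℝ)..B, Real.sqrt (1 - (x / B) ^ 2) = B * (π / 4) := by
  have := intervalIntegral.integral_comp_div (a := (0:ℝ)) (b := B)
    (fun t => Real.sqrt (1 - t ^ 2)) hB.ne'
  rw [this, zero_div, div_self hB.ne', quarter_circle_integral, smul_eq_mul]

set_option maxHeartbeats 1600000 in
lemma main_bound (a b : ℝ) (ha : 0 < a) (hb : 0 < b) (lam : ℝ) (hlam : 0 < lam) :
    ((Nat.card {p : ℕ × ℕ | 1 ≤ p.2 ∧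
        (p.1 : ℝ) ^ 2 * π ^ 2 / (4 * a ^ 2)
          + (p.2 : ℝ) ^ 2 * π ^ 2 / (4 * b ^ 2) ≤ lam} : ℝ))
      ≤ a * b / π * lam + 2 * b / π * Real.sqrt lam := by
  classical
  have hπ := Real.pi_pos
  set s := Real.sqrt lam with hs
  have hs0 : 0 < s := Real.sqrt_pos.mpr hlam
  have hss : s ^ 2 = lam := Real.sq_sqrt hlam.le
  set A := 2 * a * s / π with hA
  set B := 2 * b * s / π with hB
  have hA0 : 0 < A := by positivity
  have hB0 : 0 < B := by positivity
  set MA := ⌊A⌋₊ with hMA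
  set MB := ⌊B⌋₊ with hMB
  have hclear : ∀ m n : ℕ, (m : ℝ) ^ 2 * π ^ 2 / (4 * a ^ 2)
      + (n : ℝ) ^ 2 * π ^ 2 / (4 * b ^ 2) ≤ lam →
      (m : ℝ) ^ 2 * π ^ 2 * b ^ 2 + (n : ℝ) ^ 2 * π ^ 2 * a ^ 2 ≤ 4 * a ^ 2 * b ^ 2 * lam := by
    intro m n h
    have h2 := mul_le_mul_of_nonneg_right h (show (0:ℝ) ≤ 4 * a ^ 2 * b ^ 2 by positivity)
    have e : ((m : ℝ) ^ 2 * π ^ 2 / (4 * a ^ 2) + (n : ℝ) ^ 2 * π ^ 2 / (4 * b ^ 2))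
        * (4 * a ^ 2 * b ^ 2)
        = (m : ℝ) ^ 2 * π ^ 2 * b ^ 2 + (n : ℝ) ^ 2 * π ^ 2 * a ^ 2 := by
      field_simp
    rw [e] at h2
    linarith
  have hA2 : A ^ 2 = 4 * a ^ 2 * lam / π ^ 2 := by
    rw [hA, div_pow, ← hss]; ring
  have hB2 : B ^ 2 = 4 * b ^ 2 * lam / π ^ 2 := by
    rw [hB, div_pow, ← hss]; ring
  have hmA : ∀ m n : ℕ, (m : ℝ) ^ 2 * π ^ 2 / (4 * a ^ 2)
      + (n : ℝ) ^ 2 * π ^ 2 / (4 * b ^ 2) ≤ lam → (m : ℝ) ≤ A := by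
    intro m n h
    have h2 := hclear m n h
    have h1 : (m : ℝ) ^ 2 ≤ A ^ 2 := by
      rw [hA2, le_div_iff₀ (by positivity)]
      have hb2 : (m : ℝ) ^ 2 * π ^ 2 * b ^ 2 ≤ 4 * a ^ 2 * lam * b ^ 2 := by
        nlinarith [sq_nonneg ((n : ℝ) * π * a)]
      have hb2' : (m : ℝ) ^ 2 * π ^ 2 * b ^ 2 ≤ 4 * a ^ 2 * lam * b ^ 2 := hb2
      exact le_of_mul_le_mul_right hb2' (show (0:ℝ) < b ^ 2 by positivity)
    nlinarith [(Nat.cast_nonneg m : (0:ℝ) ≤ (m:ℝ)), hA0]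
  have hnB : ∀ m n : ℕ, (m : ℝ) ^ 2 * π ^ 2 / (4 * a ^ 2)
      + (n : ℝ) ^ 2 * π ^ 2 / (4 * b ^ 2) ≤ lam → (n : ℝ) ≤ B := by
    intro m n h
    have h2 := hclear m n h
    have h1 : (n : ℝ) ^ 2 ≤ B ^ 2 := by
      rw [hB2, le_div_iff₀ (by positivity)]
      have ha2 : (n : ℝ) ^ 2 * π ^ 2 * a ^ 2 ≤ 4 * b ^ 2 * lam * a ^ 2 := by
        nlinarith [sq_nonneg ((m : ℝ) * π * b)]
      have ha2' : (n : ℝ) ^ 2 * π ^ 2 * a ^ 2 ≤ 4 * b ^ 2 * lam * a ^ 2 := ha2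
      exact le_of_mul_le_mul_right ha2' (show (0:ℝ) < a ^ 2 by positivity)
    nlinarith [(Nat.cast_nonneg n : (0:ℝ) ≤ (n:ℝ)), hB0]
  have hkey : ∀ m n : ℕ, (m : ℝ) ^ 2 * π ^ 2 / (4 * a ^ 2)
      + (n : ℝ) ^ 2 * π ^ 2 / (4 * b ^ 2) ≤ lam →
      (m : ℝ) ≤ A * Real.sqrt (1 - ((n : ℝ) / B) ^ 2) := by
    intro m n h
    have hrhs : A ^ 2 * (1 - ((n : ℝ) / B) ^ 2)
        = (4 * a ^ 2 * b ^ 2 * lam - a ^ 2 * (n : ℝ) ^ 2 * π ^ 2) / (π ^ 2 * b ^ 2) := by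
      rw [hA, hB, ← hss]
      field_simp
      ring
    have h1 : (m : ℝ) ^ 2 ≤ A ^ 2 * (1 - ((n : ℝ) / B) ^ 2) := by
      rw [hrhs, le_div_iff₀ (by positivity)]
      linarith [hclear m n h]
    calc (m : ℝ) = Real.sqrt ((m : ℝ) ^ 2) := (Real.sqrt_sq (Nat.cast_nonneg m)).symm
      _ ≤ Real.sqrt (A ^ 2 * (1 - ((n : ℝ) / B) ^ 2)) := Real.sqrt_le_sqrt h1
      _ = A * Real.sqrt (1 - ((n : ℝ) / B) ^ 2) := by
          rw [Real.sqrt_mul (sq_nonneg A), Real.sqrt_sq hA0.le]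
  set T : Finset (ℕ × ℕ) := (Finset.range (MA + 1) ×ˢ Finset.Icc 1 MB).filter
    (fun p => (p.1 : ℝ) ^ 2 * π ^ 2 / (4 * a ^ 2)
      + (p.2 : ℝ) ^ 2 * π ^ 2 / (4 * b ^ 2) ≤ lam) with hT
  have memT : ∀ p : ℕ × ℕ, p ∈ T ↔
      ((p.1 < MA + 1 ∧ (1 ≤ p.2 ∧ p.2 ≤ MB)) ∧
        (p.1 : ℝ) ^ 2 * π ^ 2 / (4 * a ^ 2) + (p.2 : ℝ) ^ 2 * π ^ 2 / (4 * b ^ 2) ≤ lam) := by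
    intro p
    rw [hT, Finset.mem_filter, Finset.mem_product, Finset.mem_range, Finset.mem_Icc]
  have hST : {p : ℕ × ℕ | 1 ≤ p.2 ∧
      (p.1 : ℝ) ^ 2 * π ^ 2 / (4 * a ^ 2)
        + (p.2 : ℝ) ^ 2 * π ^ 2 / (4 * b ^ 2) ≤ lam} = ↑T := by
    ext p
    rw [Set.mem_setOf_eq, Finset.mem_coe, memT p]
    constructor
    · rintro ⟨h1, h2⟩
      exact ⟨⟨Nat.lt_succ_of_le (Nat.le_floor (hmA p.1 p.2 h2)),
        h1, Nat.le_floor (hnB p.1 p.2 h2)⟩, h2⟩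
    · rintro ⟨⟨_, h1, _⟩, h2⟩
      exact ⟨h1, h2⟩
  have hcard : (Nat.card {p : ℕ × ℕ | 1 ≤ p.2 ∧
      (p.1 : ℝ) ^ 2 * π ^ 2 / (4 * a ^ 2)
        + (p.2 : ℝ) ^ 2 * π ^ 2 / (4 * b ^ 2) ≤ lam}) = T.card := by
    rw [hST, Nat.card_coe_set_eq, Set.ncard_coe_finset]
  rw [hcard]
  have hsplitT := Finset.card_filter_add_card_filter_not
    (s := T) (p := fun p : ℕ × ℕ => p.1 = 0)
  set T0 := T.filter (fun p : ℕ × ℕ => p.1 = 0) with hT0def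
  set T1 := T.filter (fun p : ℕ × ℕ => ¬ p.1 = 0) with hT1def
  have hT0 : T0.card ≤ MB := by
    have h1 : T0.card ≤ (Finset.Icc 1 MB).card := by
      apply Finset.card_le_card_of_injOn (fun p => p.2)
      · intro p hp
        rw [Finset.mem_coe, Finset.mem_filter] at hp
        have := ((memT p).mp hp.1).1.2
        rw [Finset.mem_coe, Finset.mem_Icc]
        exact this
      · intro p hp q hq hpq
        rw [Finset.mem_coe, hT0def, Finset.mem_filter] at hp hq
        exact Prod.ext (hp.2.trans hq.2.symm) hpq
    rwa [Nat.card_Icc, Nat.add_sub_cancel] at h1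
  set f : ℝ → ℝ := fun x => A * Real.sqrt (1 - (x / B) ^ 2) with hf
  have hf0 : ∀ x : ℝ, 0 ≤ f x := by
    intro x
    rw [hf]
    positivity
  have hT1 : (T1.card : ℝ) ≤ ∑ n ∈ Finset.Icc 1 MB, f n := by
    have hfib : T1.card = ∑ n ∈ Finset.Icc 1 MB, (T1.filter (fun p => p.2 = n)).card := by
      apply Finset.card_eq_sum_card_fiberwise
      intro p hp
      rw [Finset.mem_coe, Finset.mem_filter] at hp
      rw [Finset.mem_coe, Finset.mem_Icc]
      exact ((memT p).mp hp.1).1.2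
    rw [hfib]
    push_cast
    apply Finset.sum_le_sum
    intro n hn
    have hfibcard : (T1.filter (fun p => p.2 = n)).card ≤ ⌊f n⌋₊ := by
      have h1 : (T1.filter (fun p => p.2 = n)).card ≤ (Finset.Icc 1 ⌊f n⌋₊).card := by
        apply Finset.card_le_card_of_injOn (fun p => p.1)
        · intro p hp
          rw [Finset.mem_coe, Finset.mem_filter, hT1def, Finset.mem_filter] at hp
          obtain ⟨⟨hpT, hne⟩, hpn⟩ := hp
          have hcond := ((memT p).mp hpT).2
          rw [Finset.mem_coe, Finset.mem_Icc]
          refine ⟨Nat.one_le_iff_ne_zero.mpr hne, Nat.le_floor ?_⟩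
          have hk := hkey p.1 p.2 hcond
          rw [hpn] at hk
          rw [hf]
          exact hk
        · intro p hp q hq hpq
          rw [Finset.mem_coe, Finset.mem_filter] at hp hq
          exact Prod.ext hpq (hp.2.trans hq.2.symm)
      rwa [Nat.card_Icc, Nat.add_sub_cancel] at h1
    calc ((T1.filter (fun p => p.2 = n)).card : ℝ) ≤ (⌊f n⌋₊ : ℝ) := by exact_mod_cast hfibcard
      _ ≤ f n := Nat.floor_le (hf0 n)
  have hcont : Continuous f := by
    rw [hf]
    exact continuous_const.mul (Real.continuous_sqrt.comp
      (continuous_const.sub ((continuous_id.div_const B).pow 2)))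
  have hant : AntitoneOn f (Set.Icc (0:ℝ) ((0:ℝ) + MB)) := by
    intro x hx y hy hxy
    have hx0 : (0:ℝ) ≤ x := hx.1
    have hdiv : x / B ≤ y / B := by
      exact (div_le_div_iff_of_pos_right hB0).mpr hxy
    have h2 : (x / B) ^ 2 ≤ (y / B) ^ 2 := by
      apply pow_le_pow_left₀ (by positivity) hdiv
    have h3 : Real.sqrt (1 - (y / B) ^ 2) ≤ Real.sqrt (1 - (x / B) ^ 2) :=
      Real.sqrt_le_sqrt (by linarith)
    rw [hf]
    exact mul_le_mul_of_nonneg_left h3 hA0.le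
  have hsum_int : ∑ i ∈ Finset.range MB, f ((0:ℝ) + (i + 1 : ℕ))
      ≤ ∫ x in (0:ℝ)..((0:ℝ) + MB), f x :=
    AntitoneOn.sum_le_integral hant
  have hsum_eq : ∑ n ∈ Finset.Icc 1 MB, f n
      = ∑ i ∈ Finset.range MB, f ((0:ℝ) + (i + 1 : ℕ)) := by
    rw [← Finset.Ico_add_one_right_eq_Icc, Finset.sum_Ico_eq_sum_range]
    simp only [Nat.add_sub_cancel]
    apply Finset.sum_congr rfl
    intro i _
    congr 1
    push_cast
    ring
  have hMBB : (MB : ℝ) ≤ B := Nat.floor_le hB0.le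
  have hint_mono : ∫ x in (0:ℝ)..(MB:ℝ), f x ≤ ∫ x in (0:ℝ)..B, f x := by
    rw [← intervalIntegral.integral_add_adjacent_intervals (a := (0:ℝ)) (b := (MB:ℝ)) (c := B)
      (hcont.intervalIntegrable _ _) (hcont.intervalIntegrable _ _)]
    have h4 : 0 ≤ ∫ x in (MB:ℝ)..B, f x :=
      intervalIntegral.integral_nonneg hMBB (fun x _ => hf0 x)
    linarith
  have hval : ∫ x in (0:ℝ)..B, f x = A * (B * (π / 4)) := by
    rw [hf, intervalIntegral.integral_const_mul, scaled_quarter B hB0]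
  have hABval : A * (B * (π / 4)) = a * b / π * lam := by
    rw [hA, hB, ← hss]; field_simp; ring
  have hBval : B = 2 * b / π * s := by rw [hB]; ring
  have hT1' : (T1.card : ℝ) ≤ a * b / π * lam := by
    calc (T1.card : ℝ) ≤ ∑ n ∈ Finset.Icc 1 MB, f n := hT1
      _ = ∑ i ∈ Finset.range MB, f ((0:ℝ) + (i + 1 : ℕ)) := hsum_eq
      _ ≤ ∫ x in (0:ℝ)..((0:ℝ) + MB), f x := hsum_int
      _ = ∫ x in (0:ℝ)..(MB:ℝ), f x := by norm_num
      _ ≤ ∫ x in (0:ℝ)..B, f x := hint_mono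
      _ = A * (B * (π / 4)) := hval
      _ = a * b / π * lam := hABval
  have hT0' : (T0.card : ℝ) ≤ 2 * b / π * s := by
    calc (T0.card : ℝ) ≤ (MB : ℝ) := by exact_mod_cast hT0
      _ ≤ B := hMBB
      _ = 2 * b / π * s := hBval
  have hTsum : (T.card : ℝ) = (T0.card : ℝ) + (T1.card : ℝ) := by exact_mod_cast hsplitT.symm
  rw [hTsum]
  linarith

/-- Upper bound for counting lattice points `(m,n)`, `m ≥ 0`, `n ≥ 1`, with
`m²π²/(4a²) + n²π²/(4b²) ≤ λ`: the count is at most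
`(ab/π)λ + (2b/π)√λ + o(√λ)` as `λ → ∞`. -/
theorem lattice_count_dirichlet_neumann_upper (a b : ℝ) (ha : 0 < a) (hb : 0 < b) :
    ∀ ε > 0, ∀ᶠ (lam : ℝ) in atTop,
      ((Nat.card {p : ℕ × ℕ | 1 ≤ p.2 ∧
          (p.1 : ℝ) ^ 2 * π ^ 2 / (4 * a ^ 2)
            + (p.2 : ℝ) ^ 2 * π ^ 2 / (4 * b ^ 2) ≤ lam} : ℝ))
        ≤ a * b / π * lam + 2 * b / π * Real.sqrt lam + ε * Real.sqrt lam := by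
  intro ε hε
  filter_upwards [eventually_gt_atTop (0:ℝ)] with lam hlam
  have h := main_bound a b ha hb lam hlam
  have h2 : 0 ≤ ε * Real.sqrt lam := by positivity
  linarith
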